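/- (Jeulin's lemma.) Let (Z_y)_{y ≥ 0} be a jointly measurable real-valued stochastic process on a probability space such that the law of Z_y is the same for all y ≥ 0, this common law is absolutely continuous with respect to Lebesgue measure, and E[|Z_y|] < ∞. Then, for any σ-finite non-negative Borel measure ν on [0,∞), the integral ∫_0^∞ |Z_y| ν(dy) is finite almost surely if and only if ν([0,∞)) < ∞. -/

import Mathlib

open MeasureTheory ProbabilityTheory Real Set Filter

open scoped ENNReal

noncomputable section

/-- Jeulin's lemma: if `(Z_y)_{y ≥ 0}` is a jointly measurable process whose one-dimensional
law does not depend on `y ≥ 0`, is absolutely continuous with respect to Lebesgue measure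
and is integrable, then for a σ-finite measure `ν`, `∫_0^∞ |Z_y| ν(dy) < ∞` a.s. iff
`ν([0,∞)) < ∞`. -/
theorem jeulin_lemma {Ω : Type*} [MeasurableSpace Ω] (P : Measure Ω)
    [IsProbabilityMeasure P] (Z : ℝ → Ω → ℝ)
    (hZmeas : Measurable (Function.uncurry Z))
    (hlaw : ∀ y y' : ℝ, 0 ≤ y → 0 ≤ y' → P.map (Z y) = P.map (Z y'))
    (hac : ∀ y : ℝ, 0 ≤ y → P.map (Z y) ≪ volume)
    (hint : ∀ y : ℝ, 0 ≤ y → Integrable (Z y) P)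
    (ν : Measure ℝ) [SigmaFinite ν] :
    (∀ᵐ ω ∂P, ∫⁻ y in Ici (0 : ℝ), ENNReal.ofReal |Z y ω| ∂ν < ⊤) ↔
      ν (Ici (0 : ℝ)) < ⊤ := by
  have hmeasZ : ∀ y : ℝ, Measurable (Z y) := fun y =>
    hZmeas.comp (measurable_const.prodMk measurable_id)
  have hf : Measurable (fun p : Ω × ℝ => ENNReal.ofReal |Z p.2 p.1|) :=
    ((hZmeas.comp measurable_swap).abs).ennreal_ofReal
  set ν' : Measure ℝ := ν.restrict (Ici 0) with hν'def
  set A : Ω → ℝ≥0∞ := fun ω => ∫⁻ y, ENNReal.ofReal |Z y ω| ∂ν' with hAdef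
  have hA : Measurable A := hf.lintegral_prod_right'
  have hgoal : ∀ ω : Ω, (∫⁻ y in Ici (0 : ℝ), ENNReal.ofReal |Z y ω| ∂ν) = A ω :=
    fun ω => rfl
  have hlawset : ∀ y : ℝ, 0 ≤ y → ∀ s : Set ℝ, MeasurableSet s →
      P (Z y ⁻¹' s) = P (Z 0 ⁻¹' s) := by
    intro y hy s hs
    rw [← Measure.map_apply (hmeasZ y) hs, ← Measure.map_apply (hmeasZ 0) hs,
      hlaw y 0 hy le_rfl]
  have hlawint : ∀ y : ℝ, 0 ≤ y →
      ∫⁻ ω, ENNReal.ofReal |Z y ω| ∂P = ∫⁻ ω, ENNReal.ofReal |Z 0 ω| ∂P := by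
    intro y hy
    have habs : Measurable fun x : ℝ => ENNReal.ofReal |x| :=
      continuous_abs.measurable.ennreal_ofReal
    rw [← lintegral_map habs (hmeasZ y), ← lintegral_map habs (hmeasZ 0),
      hlaw y 0 hy le_rfl]
  constructor
  · -- hard direction
    intro has
    by_contra hν
    rw [not_lt, top_le_iff] at hν
    -- Step 1: choose c > 0 with P (|Z 0| < c) ≤ 1/4
    have h00 : P (Z 0 ⁻¹' {0}) = 0 := by
      have hv : (volume : Measure ℝ) {(0:ℝ)} = 0 := volume_singleton
      have := hac 0 le_rfl hv
      rwa [Measure.map_apply (hmeasZ 0) (measurableSet_singleton 0)] at this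
    set s : ℕ → Set Ω := fun n => {ω | |Z 0 ω| < 1 / (n + 1)} with hsdef
    have hsm : ∀ n, MeasurableSet (s n) :=
      fun n => measurableSet_lt (hmeasZ 0).abs measurable_const
    have hsanti : Antitone s := by
      intro m n hmn ω hω
      have hω' : |Z 0 ω| < 1 / (n + 1) := hω
      show |Z 0 ω| < 1 / (m + 1)
      refine lt_of_lt_of_le hω' ?_
      have h0 : (0:ℝ) < m + 1 := by positivity
      have hc' : (m : ℝ) + 1 ≤ (n : ℝ) + 1 := by exact_mod_cast Nat.succ_le_succ hmn
      exact one_div_le_one_div_of_le h0 hc'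
    have hsint : P (⋂ n, s n) = 0 := by
      refine measure_mono_null ?_ h00
      intro ω hω
      simp only [mem_iInter, hsdef, mem_setOf_eq] at hω
      simp only [mem_preimage, mem_singleton_iff]
      by_contra h
      obtain ⟨n, hn⟩ := exists_nat_one_div_lt (abs_pos.mpr h)
      exact absurd (hω n) (not_lt.mpr hn.le)
    have hts : Tendsto (fun n => P (s n)) atTop (nhds 0) := by
      have := tendsto_measure_iInter_atTop (μ := P)
        (fun n => (hsm n).nullMeasurableSet) hsanti ⟨0, measure_ne_top P _⟩
      rwa [hsint] at this
    obtain ⟨n1, hn1⟩ := (hts.eventually_lt_const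
      (show (0:ℝ≥0∞) < 1/4 by norm_num)).exists
    set c : ℝ := 1 / (n1 + 1) with hcdef
    have hc : 0 < c := by positivity
    have hTy : ∀ y : ℝ, 0 ≤ y → P {ω | |Z y ω| < c} ≤ 1/4 := by
      intro y hy
      have hms : MeasurableSet {x : ℝ | |x| < c} :=
        measurableSet_lt measurable_id.abs measurable_const
      have h1 : {ω | |Z y ω| < c} = Z y ⁻¹' {x : ℝ | |x| < c} := rfl
      have h2 : s n1 = Z 0 ⁻¹' {x : ℝ | |x| < c} := rfl
      rw [h1, hlawset y hy _ hms, ← h2]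
      exact hn1.le
    -- Step 2: choose K = n2 with P {A > n2} ≤ 1/4
    set t : ℕ → Set Ω := fun n => {ω | (n : ℝ≥0∞) < A ω} with htdef
    have htm : ∀ n, MeasurableSet (t n) :=
      fun n => measurableSet_lt measurable_const hA
    have htanti : Antitone t := by
      intro m n hmn ω hω
      have hω' : (n : ℝ≥0∞) < A ω := hω
      show (m : ℝ≥0∞) < A ω
      exact lt_of_le_of_lt (Nat.cast_le.mpr hmn) hω'
    have htint : P (⋂ n, t n) = 0 := by
      have h0 : P {ω | ¬ A ω < ⊤} = 0 := by
        exact ae_iff.mp has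
      refine measure_mono_null ?_ h0
      intro ω hω
      simp only [mem_iInter, htdef, mem_setOf_eq] at hω
      simp only [mem_setOf_eq, not_lt, top_le_iff]
      by_contra h
      obtain ⟨n, hn⟩ := ENNReal.exists_nat_gt h
      exact absurd (hω n) (not_lt.mpr hn.le)
    have htt : Tendsto (fun n => P (t n)) atTop (nhds 0) := by
      have := tendsto_measure_iInter_atTop (μ := P)
        (fun n => (htm n).nullMeasurableSet) htanti ⟨0, measure_ne_top P _⟩
      rwa [htint] at this
    obtain ⟨n2, hn2⟩ := (htt.eventually_lt_const
      (show (0:ℝ≥0∞) < 1/4 by norm_num)).exists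
    set S : Set Ω := (t n2)ᶜ with hSdef
    have hSm : MeasurableSet S := (htm n2).compl
    have hPSc : P Sᶜ ≤ 1/4 := by rw [hSdef, compl_compl]; exact hn2.le
    have hAS : ∀ ω ∈ S, A ω ≤ (n2 : ℝ≥0∞) := fun ω hω => not_lt.mp hω
    -- per-y lower bound
    have hkey : ∀ y : ℝ, 0 ≤ y →
        ENNReal.ofReal c * (1/2) ≤ ∫⁻ ω in S, ENNReal.ofReal |Z y ω| ∂P := by
      intro y hy
      set T : Set Ω := {ω | c ≤ |Z y ω|} with hTdef
      have hTm : MeasurableSet T := measurableSet_le measurable_const (hmeasZ y).abs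
      have hPTc : P Tᶜ ≤ 1/4 := by
        have : Tᶜ = {ω | |Z y ω| < c} := by
          ext ω; simp [hTdef, not_le]
        rw [this]; exact hTy y hy
      have hST : (1/2 : ℝ≥0∞) ≤ P (S ∩ T) := by
        have hcompl : P ((S ∩ T)ᶜ) ≤ 1/2 := by
          rw [Set.compl_inter]
          refine (measure_union_le _ _).trans ?_
          refine (add_le_add hPSc hPTc).trans_eq ?_
          rw [ENNReal.div_add_div_same, show (1+1 : ℝ≥0∞) = 2 by norm_num,
            ENNReal.div_eq_div_iff] <;> norm_num
        have hsum := measure_add_measure_compl (μ := P) (hSm.inter hTm)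
        rw [measure_univ] at hsum
        have h1 : (1:ℝ≥0∞) ≤ P (S ∩ T) + 1/2 :=
          hsum.symm.le.trans (add_le_add le_rfl hcompl)
        have := tsub_le_iff_right.mpr h1
        calc (1/2 : ℝ≥0∞) = 1 - 1/2 := by norm_num
          _ ≤ P (S ∩ T) := this
      calc ENNReal.ofReal c * (1/2) ≤ ENNReal.ofReal c * P (S ∩ T) :=
            mul_le_mul_right hST _
        _ = ∫⁻ _ in S ∩ T, ENNReal.ofReal c ∂P := (setLIntegral_const _ _).symm
        _ ≤ ∫⁻ ω in S ∩ T, ENNReal.ofReal |Z y ω| ∂P :=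
            setLIntegral_mono ((hmeasZ y).abs.ennreal_ofReal)
              (fun ω hω => ENNReal.ofReal_le_ofReal hω.2)
        _ ≤ ∫⁻ ω in S, ENNReal.ofReal |Z y ω| ∂P :=
            lintegral_mono' (Measure.restrict_mono inter_subset_left le_rfl) le_rfl
    -- Tonelli on S
    have hg : Measurable fun y : ℝ => ∫⁻ ω, ENNReal.ofReal |Z y ω| ∂(P.restrict S) :=
      Measurable.lintegral_prod_right' (f := fun p : ℝ × Ω => ENNReal.ofReal |Z p.1 p.2|)
        (hZmeas.abs.ennreal_ofReal)
    have hsw : ∫⁻ ω in S, A ω ∂P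
        = ∫⁻ y, ∫⁻ ω, ENNReal.ofReal |Z y ω| ∂(P.restrict S) ∂ν' :=
      lintegral_lintegral_swap hf.aemeasurable
    have htop : (⊤ : ℝ≥0∞) ≤ ∫⁻ ω in S, A ω ∂P := by
      rw [hsw, hν'def]
      calc (⊤ : ℝ≥0∞) = (ENNReal.ofReal c * (1/2)) * ν (Ici 0) := by
            rw [hν, ENNReal.mul_top
              (mul_ne_zero (by simp [ENNReal.ofReal_eq_zero]; linarith) (by norm_num))]
        _ = ∫⁻ _ in Ici (0:ℝ), ENNReal.ofReal c * (1/2) ∂ν := (setLIntegral_const _ _).symm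
        _ ≤ ∫⁻ y in Ici (0:ℝ), (∫⁻ ω, ENNReal.ofReal |Z y ω| ∂(P.restrict S)) ∂ν :=
            setLIntegral_mono hg (fun y hy => hkey y hy)
    have hub : ∫⁻ ω in S, A ω ∂P ≤ (n2 : ℝ≥0∞) := by
      calc ∫⁻ ω in S, A ω ∂P ≤ ∫⁻ _ in S, (n2 : ℝ≥0∞) ∂P :=
            setLIntegral_mono measurable_const hAS
        _ = (n2 : ℝ≥0∞) * P S := setLIntegral_const _ _
        _ ≤ (n2 : ℝ≥0∞) * 1 := mul_le_mul_right prob_le_one _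
        _ = (n2 : ℝ≥0∞) := mul_one _
    have : (⊤ : ℝ≥0∞) ≤ (n2 : ℝ≥0∞) := htop.trans hub
    exact absurd (top_le_iff.mp this) (ENNReal.natCast_ne_top n2)
  · -- easy direction
    intro hν
    have hC : ∫⁻ ω, ENNReal.ofReal |Z 0 ω| ∂P < ⊤ := by
      have h := (hint 0 le_rfl).2
      rw [hasFiniteIntegral_iff_norm] at h
      simpa [Real.norm_eq_abs] using h
    have hswap : ∫⁻ ω, A ω ∂P = ∫⁻ y, ∫⁻ ω, ENNReal.ofReal |Z y ω| ∂P ∂ν' :=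
      lintegral_lintegral_swap hf.aemeasurable
    have hfin : ∫⁻ ω, A ω ∂P < ⊤ := by
      rw [hswap, hν'def]
      calc ∫⁻ y in Ici (0:ℝ), (∫⁻ ω, ENNReal.ofReal |Z y ω| ∂P) ∂ν
          = ∫⁻ _ in Ici (0:ℝ), (∫⁻ ω, ENNReal.ofReal |Z 0 ω| ∂P) ∂ν :=
            setLIntegral_congr_fun measurableSet_Ici
              (fun y hy => hlawint y hy)
        _ = (∫⁻ ω, ENNReal.ofReal |Z 0 ω| ∂P) * ν (Ici 0) := setLIntegral_const _ _
        _ < ⊤ := ENNReal.mul_lt_top hC hν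
    have := ae_lt_top hA hfin.ne
    filter_upwards [this] with ω hω
    rw [hgoal ω]
    exact hω
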